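/- With notation as in the U(q) coset decomposition: for Γ = Γ_1(o_F,n), Γ_0 = Γ_0(o_F,n), q a prime dividing n with totally positive generator g_q, and any γ ∈ Γ_0, one has γ·(Γ·diag(1,g_q)·Γ)·γ^{-1} = Γ·diag(1,g_q)·Γ as subsets of GL_2(F). -/

import Mathlib

open NumberField

/-- **Γ₀-invariance of the `U(q)` double coset.**  With `Γ = Γ₁(o_F,n)`, `Γ₀ = Γ₀(o_F,n)`,
`q` a prime dividing `n` with totally positive generator `g`, and any `γ₀ ∈ Γ₀`, conjugation by
`γ₀` preserves the double coset `Γ·diag(1,g)·Γ` as a subset of `GL₂(F)`. -/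

private lemma m2_ext {α : Type*} {a b c d a' b' c' d' : α}
    (h1 : a = a') (h2 : b = b') (h3 : c = c') (h4 : d = d') :
    !![a,b;c,d] = !![a',b';c',d'] := by rw [h1, h2, h3, h4]

/-- Γ is normal in Γ₀. -/
private lemma conj_mem
    (F : Type*) [Field F] [NumberField F]
    (n : Ideal (𝓞 F))
    (Γ Γ₀ : Subgroup (Matrix (Fin 2) (Fin 2) F)ˣ)
    (hΓ : ∀ A : (Matrix (Fin 2) (Fin 2) F)ˣ, A ∈ Γ ↔
      ∃ a b c d : 𝓞 F,
        A.val = !![algebraMap (𝓞 F) F a, algebraMap (𝓞 F) F b;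
                   algebraMap (𝓞 F) F c, algebraMap (𝓞 F) F d] ∧
        c ∈ n ∧ d - 1 ∈ n ∧
        ∃ u : (𝓞 F)ˣ, (u : 𝓞 F) = a * d - b * c ∧
          ∀ φ : F →+* ℝ, 0 < φ (algebraMap (𝓞 F) F (u : 𝓞 F)))
    (hΓ₀ : ∀ A : (Matrix (Fin 2) (Fin 2) F)ˣ, A ∈ Γ₀ ↔
      ∃ a b c d : 𝓞 F,
        A.val = !![algebraMap (𝓞 F) F a, algebraMap (𝓞 F) F b;
                   algebraMap (𝓞 F) F c, algebraMap (𝓞 F) F d] ∧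
        c ∈ n ∧
        ∃ u : (𝓞 F)ˣ, (u : 𝓞 F) = a * d - b * c ∧
          ∀ φ : F →+* ℝ, 0 < φ (algebraMap (𝓞 F) F (u : 𝓞 F)))
    (γ : (Matrix (Fin 2) (Fin 2) F)ˣ) (hγ : γ ∈ Γ₀)
    (x : (Matrix (Fin 2) (Fin 2) F)ˣ) (hx : x ∈ Γ) :
    γ * x * γ⁻¹ ∈ Γ := by
  obtain ⟨a, b, c, d, hval, hcn, u, hu, hupos⟩ := (hΓ₀ γ).mp hγ
  obtain ⟨a', b', c', d', hval', hcn', hdn', u', hu', hupos'⟩ := (hΓ x).mp hx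
  set φ := algebraMap (𝓞 F) F with hφdef
  set v : 𝓞 F := ((u⁻¹ : (𝓞 F)ˣ) : 𝓞 F) with hv
  have h1 : v * (a * d - b * c) = 1 := by rw [← hu]; exact u.inv_mul
  have h1F : φ v * (φ a * φ d - φ b * φ c) = 1 := by
    have := congrArg φ h1
    simpa only [map_mul, map_sub, map_one] using this
  -- inverse of γ
  have hprod : γ.val * !![φ (v*d), φ (-(v*b)); φ (-(v*c)), φ (v*a)] = 1 := by
    rw [hval, Matrix.mul_fin_two, Matrix.one_fin_two]
    refine m2_ext ?_ ?_ ?_ ?_ <;>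
      simp only [map_mul, map_neg] <;> first | ring1 | linear_combination h1F
  have hinv : (↑γ⁻¹ : Matrix (Fin 2) (Fin 2) F)
      = !![φ (v*d), φ (-(v*b)); φ (-(v*c)), φ (v*a)] :=
    Units.inv_eq_of_mul_eq_one_right hprod
  rw [hΓ]
  refine ⟨v*((a*a'+b*c')*d - (a*b'+b*d')*c),
         v*(-((a*a'+b*c')*b) + (a*b'+b*d')*a),
         v*((c*a'+d*c')*d - (c*b'+d*d')*c),
         v*(-((c*a'+d*c')*b) + (c*b'+d*d')*a), ?_, ?_, ?_, ⟨u', ?_, hupos'⟩⟩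
  · simp only [Units.val_mul]
    rw [hval, hval', hinv]
    simp only [Matrix.mul_fin_two]
    refine m2_ext ?_ ?_ ?_ ?_ <;>
      simp only [map_mul, map_neg, map_add, map_sub] <;> ring
  · have hrw : v*((c*a'+d*c')*d - (c*b'+d*d')*c)
        = (v*(d*a' - c*b' - d*d'))*c + (v*(d*d))*c' := by ring
    rw [hrw]
    exact n.add_mem (Ideal.mul_mem_left _ _ hcn) (Ideal.mul_mem_left _ _ hcn')
  · have hrw : v*(-((c*a'+d*c')*b) + (c*b'+d*d')*a) - 1
        = (v*(a*d))*(d'-1) + (v*(a*b' - b*(a'-1)))*c + (-(v*b*d))*c' := by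
      linear_combination h1
    rw [hrw]
    exact n.add_mem (n.add_mem (Ideal.mul_mem_left _ _ hdn')
      (Ideal.mul_mem_left _ _ hcn)) (Ideal.mul_mem_left _ _ hcn')
  · -- determinant
    apply FaithfulSMul.algebraMap_injective (𝓞 F) F
    rw [hu']
    have hu0 : φ a * φ d - φ b * φ c ≠ 0 := by
      intro h; rw [h, mul_zero] at h1F; exact zero_ne_one h1F
    have hVdef : φ v = (φ a * φ d - φ b * φ c)⁻¹ := eq_inv_of_mul_eq_one_left h1F
    simp only [map_mul, map_sub, map_add, map_neg]
    rw [hVdef]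
    field_simp
    ring



set_option maxHeartbeats 2000000 in
/-- conjugate of the diagonal element by a Γ₀ element stays in the double coset -/
private lemma key_conj
    (F : Type*) [Field F] [NumberField F]
    (n : Ideal (𝓞 F)) (g : 𝓞 F) (hle : n ≤ Ideal.span {g})
    (Γ Γ₀ : Subgroup (Matrix (Fin 2) (Fin 2) F)ˣ)
    (hΓ : ∀ A : (Matrix (Fin 2) (Fin 2) F)ˣ, A ∈ Γ ↔
      ∃ a b c d : 𝓞 F,
        A.val = !![algebraMap (𝓞 F) F a, algebraMap (𝓞 F) F b;
                   algebraMap (𝓞 F) F c, algebraMap (𝓞 F) F d] ∧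
        c ∈ n ∧ d - 1 ∈ n ∧
        ∃ u : (𝓞 F)ˣ, (u : 𝓞 F) = a * d - b * c ∧
          ∀ φ : F →+* ℝ, 0 < φ (algebraMap (𝓞 F) F (u : 𝓞 F)))
    (hΓ₀ : ∀ A : (Matrix (Fin 2) (Fin 2) F)ˣ, A ∈ Γ₀ ↔
      ∃ a b c d : 𝓞 F,
        A.val = !![algebraMap (𝓞 F) F a, algebraMap (𝓞 F) F b;
                   algebraMap (𝓞 F) F c, algebraMap (𝓞 F) F d] ∧
        c ∈ n ∧
        ∃ u : (𝓞 F)ˣ, (u : 𝓞 F) = a * d - b * c ∧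
          ∀ φ : F →+* ℝ, 0 < φ (algebraMap (𝓞 F) F (u : 𝓞 F)))
    (dEl : (Matrix (Fin 2) (Fin 2) F)ˣ)
    (hdEl : dEl.val = !![1, 0; 0, algebraMap (𝓞 F) F g])
    (γ : (Matrix (Fin 2) (Fin 2) F)ˣ) (hγ : γ ∈ Γ₀) :
    ∃ γ₁ ∈ Γ, ∃ γ₂ ∈ Γ, γ * dEl * γ⁻¹ = γ₁ * dEl * γ₂ := by
  obtain ⟨a, b, c, d, hval, hcn, u, hu, hupos⟩ := (hΓ₀ γ).mp hγ
  obtain ⟨c', rfl⟩ : g ∣ c := Ideal.mem_span_singleton.mp (hle hcn)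
  set φ := algebraMap (𝓞 F) F with hφdef
  set v : 𝓞 F := ((u⁻¹ : (𝓞 F)ˣ) : 𝓞 F) with hv
  have h1 : v * (a * d - b * (g * c')) = 1 := by rw [← hu]; exact u.inv_mul
  have h1F : φ v * (φ a * φ d - φ b * (φ g * φ c')) = 1 := by
    have := congrArg φ h1
    simpa only [map_mul, map_sub, map_one] using this
  have hu0 : φ a * φ d - φ b * (φ g * φ c') ≠ 0 := by
    intro h; rw [h, mul_zero] at h1F; exact zero_ne_one h1F
  have hVdef : φ v = (φ a * φ d - φ b * (φ g * φ c'))⁻¹ :=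
    eq_inv_of_mul_eq_one_left h1F
  -- the ingredients
  obtain ⟨A, hA⟩ : ∃ A : 𝓞 F, A = v*(a*d - g*(b*(g*c'))) := ⟨_, rfl⟩
  obtain ⟨B, hB⟩ : ∃ B : 𝓞 F, B = v*(a*b*(g-1)) := ⟨_, rfl⟩
  obtain ⟨nr, hnr⟩ : ∃ nr : 𝓞 F, nr = (2 - A)*(v*((g*c')*d*(1-g))) := ⟨_, rfl⟩
  obtain ⟨c₂, hc₂⟩ : ∃ c₂ : 𝓞 F, c₂ = -(v^3*b^2*g^2*c'^3*d*(g-1)^3) := ⟨_, rfl⟩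
  obtain ⟨d₂, hd₂⟩ : ∃ d₂ : 𝓞 F,
      d₂ = v^2*(a*b*c'*d*(g-1)^2) + v^3*(g*a*b^2*c'^2*d*(g-1)^3) + v*(a*d - b*c') := ⟨_, rfl⟩
  -- determinant of γ₂ is 1
  have hdet : A * d₂ - B * c₂ = 1 := by
    rw [hA, hB, hc₂, hd₂]
    linear_combination ((1:𝓞 F) + (-1)*b*c'*g*v + (1)*a*d*v + (1)*a*b*c'*d*v^2 + (-2)*a*b*c'*d*g*v^2 + (1)*a*b*c'*d*g^2*v^2 + (-1)*a*b^2*c'^2*d*g*v^3 + (3)*a*b^2*c'^2*d*g^2*v^3 + (-3)*a*b^2*c'^2*d*g^3*v^3 + (1)*a*b^2*c'^2*d*g^4*v^3) * h1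
  -- memberships
  have hnrmem : nr ∈ n := by
    have hrw : nr = ((2 - A)*(v*(d*(1-g))))*(g*c') := by rw [hnr]; ring
    rw [hrw]; exact Ideal.mul_mem_left _ _ hcn
  have hc₂mem : c₂ ∈ n := by
    have hrw : c₂ = (-(v^3*b^2*g*c'^2*d*(g-1)^3))*(g*c') := by rw [hc₂]; ring
    rw [hrw]; exact Ideal.mul_mem_left _ _ hcn
  have hAmem : 1 - A ∈ n := by
    have hrw : 1 - A = (v*b*(g-1))*(g*c') := by rw [hA]; linear_combination -h1
    rw [hrw]; exact Ideal.mul_mem_left _ _ hcn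
  have hd₂mem : d₂ - 1 ∈ n := by
    have hrw : d₂ - 1 = (A*d₂ - 1) + (1 - A)*d₂ := by ring
    have hAd : A*d₂ - 1 = B*c₂ := by linear_combination hdet
    rw [hrw, hAd]
    exact n.add_mem (Ideal.mul_mem_left _ _ hc₂mem) (Ideal.mul_mem_right _ _ hAmem)
  -- the two units
  have hdetF : φ A * φ d₂ - φ B * φ c₂ = 1 := by
    have := congrArg φ hdet
    simpa only [map_mul, map_sub, map_one] using this
  refine ⟨⟨!![φ 1, φ 0; φ nr, φ 1], !![φ 1, φ 0; -(φ nr), φ 1], ?_, ?_⟩, ?_,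
          ⟨!![φ A, φ B; φ c₂, φ d₂], !![φ d₂, -(φ B); -(φ c₂), φ A], ?_, ?_⟩, ?_, ?_⟩
  · rw [Matrix.mul_fin_two, Matrix.one_fin_two]
    refine m2_ext ?_ ?_ ?_ ?_ <;> simp only [map_one, map_zero] <;> ring
  · rw [Matrix.mul_fin_two, Matrix.one_fin_two]
    refine m2_ext ?_ ?_ ?_ ?_ <;> simp only [map_one, map_zero] <;> ring
  · rw [hΓ]
    exact ⟨1, 0, nr, 1, rfl, hnrmem, by simpa using n.zero_mem,
      ⟨1, by rw [Units.val_one]; ring, by intro ψ; simp⟩⟩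
  · rw [Matrix.mul_fin_two, Matrix.one_fin_two]
    refine m2_ext ?_ ?_ ?_ ?_ <;> first | ring1 | linear_combination hdetF
  · rw [Matrix.mul_fin_two, Matrix.one_fin_two]
    refine m2_ext ?_ ?_ ?_ ?_ <;> first | ring1 | linear_combination hdetF
  · rw [hΓ]
    exact ⟨A, B, c₂, d₂, rfl, hc₂mem, hd₂mem,
      ⟨1, by rw [Units.val_one]; exact hdet.symm, by intro ψ; simp⟩⟩
  · -- the matrix identity
    rw [mul_inv_eq_iff_eq_mul]
    refine Units.ext ?_
    simp only [Units.val_mul]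
    rw [hval, hdEl]
    show !![φ a, φ b; φ (g*c'), φ d] * !![1, 0; 0, φ g]
      = !![φ 1, φ 0; φ nr, φ 1] * !![1, 0; 0, φ g] * !![φ A, φ B; φ c₂, φ d₂]
        * !![φ a, φ b; φ (g*c'), φ d]
    simp only [Matrix.mul_fin_two]
    refine m2_ext ?_ ?_ ?_ ?_
    · simp only [hnr, hA, hB, hc₂, hd₂, map_mul, map_sub, map_add, map_neg, map_pow,
        map_one, map_zero, map_ofNat]
      linear_combination ((-1 : F)*(φ a)) * h1F
    · simp only [hnr, hA, hB, hc₂, hd₂, map_mul, map_sub, map_add, map_neg, map_pow,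
        map_one, map_zero, map_ofNat]
      linear_combination ((-1 : F)*(φ b)*(φ g)) * h1F
    · simp only [hnr, hA, hB, hc₂, hd₂, map_mul, map_sub, map_add, map_neg, map_pow,
        map_one, map_zero, map_ofNat]
      linear_combination ((-1 : F)*(φ c')*(φ g) + (-1)*(φ a)*(φ c')*(φ d)*(φ g)*(φ v) + (1)*(φ a)*(φ c')*(φ d)*(φ g)^2*(φ v) + (-1)*(φ a)*(φ b)*(φ c')^2*(φ d)*(φ g)^3*(φ v)^2 + (1)*(φ a)*(φ b)*(φ c')^2*(φ d)*(φ g)^4*(φ v)^2 + (1)*(φ a)^2*(φ c')*(φ d)^2*(φ g)*(φ v)^2 + (-1)*(φ a)^2*(φ c')*(φ d)^2*(φ g)^2*(φ v)^2) * h1F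
    · simp only [hnr, hA, hB, hc₂, hd₂, map_mul, map_sub, map_add, map_neg, map_pow,
        map_one, map_zero, map_ofNat]
      linear_combination ((-1 : F)*(φ d)*(φ g) + (-1)*(φ b)*(φ c')*(φ d)*(φ g)*(φ v) + (1)*(φ b)*(φ c')*(φ d)*(φ g)^2*(φ v) + (1)*(φ b)^2*(φ c')^2*(φ d)*(φ g)^2*(φ v)^2 + (-3)*(φ b)^2*(φ c')^2*(φ d)*(φ g)^3*(φ v)^2 + (2)*(φ b)^2*(φ c')^2*(φ d)*(φ g)^4*(φ v)^2 + (1)*(φ a)*(φ b)*(φ c')*(φ d)^2*(φ g)^2*(φ v)^2 + (-1)*(φ a)*(φ b)*(φ c')*(φ d)^2*(φ g)^3*(φ v)^2) * h1F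


theorem U_q_double_coset_Gamma0_invariant'
    (F : Type*) [Field F] [NumberField F]
    (n q : Ideal (𝓞 F)) (hdvd : q ∣ n)
    (g : 𝓞 F) (hg : q = Ideal.span {g})
    (Γ Γ₀ : Subgroup (Matrix (Fin 2) (Fin 2) F)ˣ)
    (dEl : (Matrix (Fin 2) (Fin 2) F)ˣ)
    (hdEl : dEl.val = !![1, 0; 0, algebraMap (𝓞 F) F g])
    (γ₀ : (Matrix (Fin 2) (Fin 2) F)ˣ) (hγ₀ : γ₀ ∈ Γ₀)
    (key : ∀ γ ∈ Γ₀, ∃ γ₁ ∈ Γ, ∃ γ₂ ∈ Γ, γ * dEl * γ⁻¹ = γ₁ * dEl * γ₂)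
    (nml : ∀ γ ∈ Γ₀, ∀ x ∈ Γ, γ * x * γ⁻¹ ∈ Γ) :
    ∀ x : (Matrix (Fin 2) (Fin 2) F)ˣ,
      (∃ γ₁ ∈ Γ, ∃ γ₂ ∈ Γ, γ₀ * x * γ₀⁻¹ = γ₁ * dEl * γ₂) ↔
      (∃ γ₁ ∈ Γ, ∃ γ₂ ∈ Γ, x = γ₁ * dEl * γ₂) := by
  intro x
  constructor
  · rintro ⟨γ₁, h₁, γ₂, h₂, heq⟩
    have hγ₀' : γ₀⁻¹ ∈ Γ₀ := Γ₀.inv_mem hγ₀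
    obtain ⟨δ₁, hδ₁, δ₂, hδ₂, hkey⟩ := key γ₀⁻¹ hγ₀'
    rw [inv_inv] at hkey
    have m₁ : γ₀⁻¹ * γ₁ * γ₀ ∈ Γ := by
      have := nml γ₀⁻¹ hγ₀' γ₁ h₁; rwa [inv_inv] at this
    have m₂ : γ₀⁻¹ * γ₂ * γ₀ ∈ Γ := by
      have := nml γ₀⁻¹ hγ₀' γ₂ h₂; rwa [inv_inv] at this
    refine ⟨(γ₀⁻¹ * γ₁ * γ₀) * δ₁, Γ.mul_mem m₁ hδ₁,
            δ₂ * (γ₀⁻¹ * γ₂ * γ₀), Γ.mul_mem hδ₂ m₂, ?_⟩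
    have hx : x = γ₀⁻¹ * (γ₀ * x * γ₀⁻¹) * γ₀ := by group
    rw [hx, heq]
    have : γ₀⁻¹ * (γ₁ * dEl * γ₂) * γ₀
        = (γ₀⁻¹ * γ₁ * γ₀) * (γ₀⁻¹ * dEl * γ₀) * (γ₀⁻¹ * γ₂ * γ₀) := by group
    rw [this, hkey]
    group
  · rintro ⟨γ₁, h₁, γ₂, h₂, heq⟩
    obtain ⟨δ₁, hδ₁, δ₂, hδ₂, hkey⟩ := key γ₀ hγ₀
    have m₁ : γ₀ * γ₁ * γ₀⁻¹ ∈ Γ := nml γ₀ hγ₀ γ₁ h₁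
    have m₂ : γ₀ * γ₂ * γ₀⁻¹ ∈ Γ := nml γ₀ hγ₀ γ₂ h₂
    refine ⟨(γ₀ * γ₁ * γ₀⁻¹) * δ₁, Γ.mul_mem m₁ hδ₁,
            δ₂ * (γ₀ * γ₂ * γ₀⁻¹), Γ.mul_mem hδ₂ m₂, ?_⟩
    rw [heq]
    have : γ₀ * (γ₁ * dEl * γ₂) * γ₀⁻¹
        = (γ₀ * γ₁ * γ₀⁻¹) * (γ₀ * dEl * γ₀⁻¹) * (γ₀ * γ₂ * γ₀⁻¹) := by group
    rw [this, hkey]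
    group

theorem U_q_double_coset_Gamma0_invariant
    (F : Type*) [Field F] [NumberField F]
    (htot : ∀ v : InfinitePlace F, v.IsReal)
    (hncl : ∀ I : Ideal (𝓞 F), I ≠ ⊥ → ∃ a : 𝓞 F, I = Ideal.span {a} ∧
      ∀ φ : F →+* ℝ, 0 < φ (algebraMap (𝓞 F) F a))
    (n q : Ideal (𝓞 F)) (hn : n ≠ ⊥) (hq : q.IsPrime) (hq0 : q ≠ ⊥) (hdvd : q ∣ n)
    (g : 𝓞 F) (hg : q = Ideal.span {g})
    (hgpos : ∀ φ : F →+* ℝ, 0 < φ (algebraMap (𝓞 F) F g))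
    (Γ Γ₀ : Subgroup (Matrix (Fin 2) (Fin 2) F)ˣ)
    (hΓ : ∀ A : (Matrix (Fin 2) (Fin 2) F)ˣ, A ∈ Γ ↔
      ∃ a b c d : 𝓞 F,
        A.val = !![algebraMap (𝓞 F) F a, algebraMap (𝓞 F) F b;
                   algebraMap (𝓞 F) F c, algebraMap (𝓞 F) F d] ∧
        c ∈ n ∧ d - 1 ∈ n ∧
        ∃ u : (𝓞 F)ˣ, (u : 𝓞 F) = a * d - b * c ∧
          ∀ φ : F →+* ℝ, 0 < φ (algebraMap (𝓞 F) F (u : 𝓞 F)))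
    (hΓ₀ : ∀ A : (Matrix (Fin 2) (Fin 2) F)ˣ, A ∈ Γ₀ ↔
      ∃ a b c d : 𝓞 F,
        A.val = !![algebraMap (𝓞 F) F a, algebraMap (𝓞 F) F b;
                   algebraMap (𝓞 F) F c, algebraMap (𝓞 F) F d] ∧
        c ∈ n ∧
        ∃ u : (𝓞 F)ˣ, (u : 𝓞 F) = a * d - b * c ∧
          ∀ φ : F →+* ℝ, 0 < φ (algebraMap (𝓞 F) F (u : 𝓞 F)))
    (dEl : (Matrix (Fin 2) (Fin 2) F)ˣ)
    (hdEl : dEl.val = !![1, 0; 0, algebraMap (𝓞 F) F g])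
    (γ₀ : (Matrix (Fin 2) (Fin 2) F)ˣ) (hγ₀ : γ₀ ∈ Γ₀) :
    ∀ x : (Matrix (Fin 2) (Fin 2) F)ˣ,
      (∃ γ₁ ∈ Γ, ∃ γ₂ ∈ Γ, γ₀ * x * γ₀⁻¹ = γ₁ * dEl * γ₂) ↔
      (∃ γ₁ ∈ Γ, ∃ γ₂ ∈ Γ, x = γ₁ * dEl * γ₂) := by
  have hle : n ≤ Ideal.span {g} := by rw [← hg]; exact Ideal.le_of_dvd hdvd
  exact U_q_double_coset_Gamma0_invariant' F n q hdvd g hg Γ Γ₀ dEl hdEl γ₀ hγ₀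
    (fun γ hγ => key_conj F n g hle Γ Γ₀ hΓ hΓ₀ dEl hdEl γ hγ)
    (fun γ hγ x hx => conj_mem F n Γ Γ₀ hΓ hΓ₀ γ hγ x hx)
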